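/- Let σ(n) = 2^{-k} for n ∈ {2^k, ..., 2^{k+1}-1}, k ∈ ℕ_0, and let τ be the nonincreasing rearrangement of its d-th tensor power. Then for each k ∈ ℕ_0, the number of indices n with τ(n) = 2^{-k} equals 2^k · binom(k+d-1, d-1). -/

import Mathlib

open Filter Real Set

section Aux

def fiberEquiv (m : ℕ) : {n : ℕ+ // Nat.log 2 (n : ℕ) = m} ≃ (Set.Ico (2^m) (2^(m+1)) : Set ℕ) where
  toFun n := ⟨(n.1 : ℕ), by
    have := (Nat.log_eq_iff (Or.inr ⟨one_lt_two, n.1.ne_zero⟩)).mp n.2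
    simpa [Set.mem_Ico] using this⟩
  invFun x := ⟨⟨x.1, lt_of_lt_of_le (by positivity : 0 < 2 ^ m) x.2.1⟩, by
    have hx := x.2
    rw [Set.mem_Ico] at hx
    exact (Nat.log_eq_iff (n := (x : ℕ)) (Or.inr ⟨one_lt_two, by have h2 : 0 < 2 ^ m := (by positivity); omega⟩)).mpr hx⟩
  left_inv n := by ext; rfl
  right_inv x := rfl

lemma fiber_card (m : ℕ) : Nat.card {n : ℕ+ // Nat.log 2 (n : ℕ) = m} = 2 ^ m := by
  rw [Nat.card_congr (fiberEquiv m), Nat.card_coe_set_eq]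
  rw [← Finset.coe_Ico, Set.ncard_coe_finset, Nat.card_Ico]
  rw [pow_succ]; omega

noncomputable instance fiberFintype (m : ℕ) : Fintype {n : ℕ+ // Nat.log 2 (n : ℕ) = m} :=
  Fintype.ofEquiv _ (fiberEquiv m).symm

noncomputable instance compFintype (d k : ℕ) : Fintype {P : Fin d → ℕ // ∑ j, P j = k} :=
  Fintype.ofEquiv _ (Sym.equivNatSumOfFintype (Fin d) k)

def levelEquiv (d k : ℕ) :
    {x : Fin d → ℕ+ // ∑ j, Nat.log 2 ((x j : ℕ)) = k} ≃
      Σ f : {P : Fin d → ℕ // ∑ j, P j = k}, ∀ j, {n : ℕ+ // Nat.log 2 (n : ℕ) = f.1 j} where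
  toFun x := ⟨⟨fun j => Nat.log 2 ((x.1 j : ℕ)), x.2⟩, fun j => ⟨x.1 j, rfl⟩⟩
  invFun fg := ⟨fun j => (fg.2 j).1, by
    have : ∀ j, Nat.log 2 (((fg.2 j).1 : ℕ)) = fg.1.1 j := fun j => (fg.2 j).2
    simp only [this]; exact fg.1.2⟩
  left_inv x := rfl
  right_inv fg := by
    obtain ⟨⟨f, hf⟩, g⟩ := fg
    have hg : ∀ j, Nat.log 2 (((g j).1 : ℕ)) = f j := fun j => (g j).2
    have hfe : (fun j => Nat.log 2 (((g j).1 : ℕ))) = f := funext hg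
    refine Sigma.ext (Subtype.ext hfe) ?_
    refine (Function.hfunext rfl ?_)
    intro j j' hj
    cases (eq_of_heq hj)
    exact Subtype.heq_iff_coe_eq
      (by intro x; change Nat.log 2 ↑x = Nat.log 2 ((g j : ℕ+) : ℕ) ↔ Nat.log 2 ↑x = f j;
          rw [hg j]) |>.mpr rfl

lemma level_card (d k : ℕ) (hd : 1 ≤ d) :
    Nat.card {x : Fin d → ℕ+ // ∑ j, Nat.log 2 ((x j : ℕ)) = k} =
      2 ^ k * (k + d - 1).choose (d - 1) := by
  rw [Nat.card_congr (levelEquiv d k), Nat.card_eq_fintype_card, Fintype.card_sigma]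
  have hfib : ∀ (f : {P : Fin d → ℕ // ∑ j, P j = k}),
      Fintype.card (∀ j, {n : ℕ+ // Nat.log 2 (n : ℕ) = f.1 j}) = 2 ^ k := by
    intro f
    rw [Fintype.card_pi]
    have : ∀ j, Fintype.card {n : ℕ+ // Nat.log 2 (n : ℕ) = f.1 j} = 2 ^ (f.1 j) := by
      intro j; rw [← Nat.card_eq_fintype_card, fiber_card]
    rw [Finset.prod_congr rfl (fun j _ => this j), Finset.prod_pow_eq_pow_sum, f.2]
  rw [Finset.sum_congr rfl (fun f _ => hfib f), Finset.sum_const, Finset.card_univ, smul_eq_mul]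
  have hcard : Fintype.card {P : Fin d → ℕ // ∑ j, P j = k} = (k + d - 1).choose (d - 1) := by
    rw [← Fintype.card_congr (Sym.equivNatSumOfFintype (Fin d) k), Sym.card_sym_eq_choose,
      Fintype.card_fin]
    have h1 : d + k - 1 = k + d - 1 := by omega
    have h2 := Nat.choose_symm (show d - 1 ≤ k + d - 1 by omega)
    rw [show k + d - 1 - (d - 1) = k from by omega] at h2
    rw [h1, ← h2]
  rw [hcard, mul_comm]

def initEquiv (c : ℕ) : {n : ℕ+ // (n : ℕ) ≤ c} ≃ (Set.Icc 1 c : Set ℕ) where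
  toFun n := ⟨(n.1 : ℕ), ⟨n.1.one_le, n.2⟩⟩
  invFun x := ⟨⟨x.1, lt_of_lt_of_le one_pos x.2.1⟩, x.2.2⟩
  left_inv n := by ext; rfl
  right_inv x := rfl

lemma init_finite (c : ℕ) : {n : ℕ+ | (n : ℕ) ≤ c}.Finite := by
  have : {n : ℕ+ | (n : ℕ) ≤ c} = (fun n : ℕ+ => (n : ℕ)) ⁻¹' (Set.Iic c) := rfl
  rw [this]
  exact Set.Finite.preimage (fun a _ b _ h => PNat.coe_injective h) (Set.finite_Iic c)

lemma init_ncard (c : ℕ) : {n : ℕ+ | (n : ℕ) ≤ c}.ncard = c := by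
  rw [← Nat.card_coe_set_eq]
  have h1 : Nat.card ↥{n : ℕ+ | (n : ℕ) ≤ c} = Nat.card (Set.Icc 1 c : Set ℕ) :=
    Nat.card_congr (initEquiv c)
  rw [h1, Nat.card_coe_set_eq, ← Finset.coe_Icc, Set.ncard_coe_finset, Nat.card_Icc]
  omega

lemma lower_set_eq (S : Set ℕ+) (hf : S.Finite)
    (hl : ∀ ⦃m n : ℕ+⦄, m ≤ n → n ∈ S → m ∈ S) :
    S = {n : ℕ+ | (n : ℕ) ≤ S.ncard} := by
  have hsub : S ⊆ {n : ℕ+ | (n : ℕ) ≤ S.ncard} := by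
    intro n hn
    by_contra hc
    simp only [Set.mem_setOf_eq, not_le] at hc
    have hsub2 : {m : ℕ+ | (m : ℕ) ≤ (n : ℕ)} ⊆ S := by
      intro m hm
      exact hl (by exact_mod_cast hm) hn
    have := Set.ncard_le_ncard hsub2 hf
    rw [init_ncard] at this
    exact absurd this (not_le.mpr hc)
  exact Set.eq_of_subset_of_ncard_le hsub (le_of_eq (init_ncard _)) (init_finite _)

lemma levelle_finite (d k : ℕ) : {x : Fin d → ℕ+ | ∑ j, Nat.log 2 ((x j : ℕ)) ≤ k}.Finite := by
  apply Set.Finite.subset (Set.Finite.pi (fun _ : Fin d => init_finite (2 ^ (k + 1))))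
  intro x hx
  rw [Set.mem_univ_pi]
  intro j
  have h1 : Nat.log 2 ((x j : ℕ)) ≤ k := by
    refine le_trans ?_ hx
    exact Finset.single_le_sum (f := fun j : Fin d => Nat.log 2 ((x j : ℕ)))
      (fun i _ => Nat.zero_le _) (Finset.mem_univ j)
  have h2 : (x j : ℕ) < 2 ^ (Nat.log 2 (x j : ℕ) + 1) := Nat.lt_pow_succ_log_self one_lt_two _
  have : (x j : ℕ) < 2 ^ (k + 1) := lt_of_lt_of_le h2 (Nat.pow_le_pow_right (by norm_num) (by omega))
  exact le_of_lt this

end Aux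

theorem stmt_11 (d : ℕ) (hd : 1 ≤ d) (σ τ : ℕ+ → ℝ)
    (hσ : ∀ n : ℕ+, σ n = (2 : ℝ) ^ (-(Nat.log 2 (n : ℕ) : ℤ)))
    (hτa : Antitone τ)
    -- τ is the nonincreasing rearrangement of the d-th tensor power of σ
    (hre : ∀ t : ℝ, 0 < t →
      {n : ℕ+ | t ≤ τ n}.ncard = {x : Fin d → ℕ+ | t ≤ ∏ j, σ (x j)}.ncard)
    (k : ℕ) :
    {n : ℕ+ | τ n = (2 : ℝ) ^ (-(k : ℤ))}.ncard = 2 ^ k * Nat.choose (k + d - 1) (d - 1) := by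
  classical
  set q : ℝ := (2 : ℝ) ^ (-(k : ℤ)) with hq_def
  clear_value q
  have hq : (0 : ℝ) < q := by rw [hq_def]; positivity
  -- product formula
  have hprod : ∀ x : Fin d → ℕ+,
      ∏ j, σ (x j) = (2 : ℝ) ^ (-(((∑ j, Nat.log 2 ((x j : ℕ)) : ℕ)) : ℤ)) := by
    intro x
    have : ∀ j : Fin d, σ (x j) = ((2 : ℝ)⁻¹) ^ (Nat.log 2 ((x j : ℕ))) := by
      intro j
      rw [hσ, zpow_neg, zpow_natCast, inv_pow]
    rw [Finset.prod_congr rfl (fun j _ => this j), Finset.prod_pow_eq_pow_sum]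
    rw [zpow_neg, zpow_natCast, inv_pow]
  -- comparison lemmas
  have hle : ∀ S : ℕ, (q ≤ (2 : ℝ) ^ (-(S : ℤ)) ↔ S ≤ k) := by
    intro S
    rw [hq_def, zpow_le_zpow_iff_right₀ (by norm_num : (1:ℝ) < 2)]
    constructor
    · intro h; exact_mod_cast neg_le_neg_iff.mp h
    · intro h; exact neg_le_neg (by exact_mod_cast h)
  have hlt : ∀ S : ℕ, (q < (2 : ℝ) ^ (-(S : ℤ)) ↔ S < k) := by
    intro S
    rw [hq_def, zpow_lt_zpow_iff_right₀ (by norm_num : (1:ℝ) < 2)]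
    constructor
    · intro h; exact_mod_cast neg_lt_neg_iff.mp h
    · intro h; exact neg_lt_neg (by exact_mod_cast h)
  -- level sets of the tensor power
  have hBk : {x : Fin d → ℕ+ | q ≤ ∏ j, σ (x j)} =
      {x : Fin d → ℕ+ | ∑ j, Nat.log 2 ((x j : ℕ)) ≤ k} := by
    ext x; rw [Set.mem_setOf_eq, Set.mem_setOf_eq, hprod x, hle]
  have hLe_fin := levelle_finite d k
  have hLt_fin : {x : Fin d → ℕ+ | ∑ j, Nat.log 2 ((x j : ℕ)) < k}.Finite :=
    hLe_fin.subset (fun x hx => by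
      simp only [Set.mem_setOf_eq] at hx ⊢; omega)
  have hEq_fin : {x : Fin d → ℕ+ | ∑ j, Nat.log 2 ((x j : ℕ)) = k}.Finite :=
    hLe_fin.subset (fun x hx => by
      simp only [Set.mem_setOf_eq] at hx ⊢; omega)
  set c : ℕ := {x : Fin d → ℕ+ | ∑ j, Nat.log 2 ((x j : ℕ)) ≤ k}.ncard with hc_def
  set c' : ℕ := {x : Fin d → ℕ+ | ∑ j, Nat.log 2 ((x j : ℕ)) < k}.ncard with hc'_def
  clear_value c c'
  have hD : {x : Fin d → ℕ+ | ∑ j, Nat.log 2 ((x j : ℕ)) = k}.ncard =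
      2 ^ k * (k + d - 1).choose (d - 1) := by
    rw [← Nat.card_coe_set_eq]
    exact level_card d k hd
  have hsplit : c = c' + 2 ^ k * (k + d - 1).choose (d - 1) := by
    rw [hc_def, ← hD, hc'_def]
    rw [← Set.ncard_union_eq (by
        rw [Set.disjoint_left]; intro x hx1 hx2
        exact absurd hx2 (ne_of_lt hx1)) hLt_fin hEq_fin]
    congr 1
    ext x; simp only [Set.mem_union, Set.mem_setOf_eq]
    exact ⟨fun h => h.lt_or_eq, fun h => h.elim le_of_lt le_of_eq⟩
  -- the rearranged sets
  have hlower : ∀ t : ℝ, ∀ ⦃m n : ℕ+⦄, m ≤ n → n ∈ {p : ℕ+ | t ≤ τ p} → m ∈ {p : ℕ+ | t ≤ τ p} :=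
    fun t m n hmn hn => le_trans hn (hτa hmn)
  -- A(q) is finite
  have hBk_ne : {x : Fin d → ℕ+ | ∑ j, Nat.log 2 ((x j : ℕ)) ≤ k}.Nonempty := by
    refine ⟨fun _ => 1, ?_⟩
    simp [Set.mem_setOf_eq, Nat.log_one_right]
  have hAq_fin : {n : ℕ+ | q ≤ τ n}.Finite := by
    by_contra hinf
    have h0 : {n : ℕ+ | q ≤ τ n}.ncard = 0 := Set.Infinite.ncard hinf
    rw [hre q hq, hBk] at h0
    have := (Set.ncard_pos hLe_fin).mpr hBk_ne
    exact absurd h0 this.ne'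
  have hAq_card : {n : ℕ+ | q ≤ τ n}.ncard = c := by
    rw [hre q hq, hBk]; exact hc_def.symm
  have hAq_eq : {n : ℕ+ | q ≤ τ n} = {n : ℕ+ | (n : ℕ) ≤ c} := by
    have := lower_set_eq _ hAq_fin (hlower q)
    rwa [hAq_card] at this
  -- strict level: t' = q * (3/2)
  set t' : ℝ := q * (3 / 2) with ht'_def
  clear_value t'
  have ht'_pos : (0 : ℝ) < t' := by rw [ht'_def]; exact mul_pos hq (by norm_num)
  have ht'_gt : q < t' := by nlinarith
  have ht'_iff : ∀ S : ℕ, (t' ≤ (2 : ℝ) ^ (-(S : ℤ)) ↔ S < k) := by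
    intro S
    constructor
    · intro h
      rw [← hlt S]
      exact lt_of_lt_of_le ht'_gt h
    · intro hS
      have h1 : S + 1 ≤ k := hS
      have h3 : q ≤ (2 : ℝ) ^ (-(S : ℤ) - 1) := by
        rw [hq_def]
        refine zpow_le_zpow_right₀ (by norm_num : (1:ℝ) ≤ 2) ?_
        have h1' : (S : ℤ) + 1 ≤ (k : ℤ) := by exact_mod_cast h1
        linarith
      have h4 : (2 : ℝ) ^ (-(S : ℤ) - 1) = (2 : ℝ) ^ (-(S : ℤ)) / 2 := by
        rw [zpow_sub₀ (by norm_num : (2:ℝ) ≠ 0), zpow_one]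
      rw [h4] at h3
      have h5 : (0:ℝ) < (2 : ℝ) ^ (-(S : ℤ)) := by positivity
      rw [ht'_def]
      nlinarith [h3, h5, hq]
  have hBt' : {x : Fin d → ℕ+ | t' ≤ ∏ j, σ (x j)} =
      {x : Fin d → ℕ+ | ∑ j, Nat.log 2 ((x j : ℕ)) < k} := by
    ext x; rw [Set.mem_setOf_eq, Set.mem_setOf_eq, hprod x, ht'_iff]
  have hAt'_fin : {n : ℕ+ | t' ≤ τ n}.Finite :=
    hAq_fin.subset (fun n hn => le_trans (le_of_lt ht'_gt) hn)
  have hAt'_card : {n : ℕ+ | t' ≤ τ n}.ncard = c' := by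
    rw [hre t' ht'_pos, hBt']; exact hc'_def.symm
  have hAt'_eq : {n : ℕ+ | t' ≤ τ n} = {n : ℕ+ | (n : ℕ) ≤ c'} := by
    have := lower_set_eq _ hAt'_fin (hlower t')
    rwa [hAt'_card] at this
  -- the strict set {τ > q}
  have hgt : {n : ℕ+ | q < τ n} = {n : ℕ+ | (n : ℕ) ≤ c'} := by
    apply Set.Subset.antisymm
    · intro n hn
      rw [Set.mem_setOf_eq] at hn
      have hτn_pos : 0 < τ n := lt_trans hq hn
      have hsubA : {m : ℕ+ | τ n ≤ τ m} ⊆ {m : ℕ+ | q ≤ τ m} :=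
        fun m hm => le_trans (le_of_lt hn) hm
      have hA_fin : {m : ℕ+ | τ n ≤ τ m}.Finite := hAq_fin.subset hsubA
      have hBsub : {x : Fin d → ℕ+ | τ n ≤ ∏ j, σ (x j)} ⊆
          {x : Fin d → ℕ+ | ∑ j, Nat.log 2 ((x j : ℕ)) < k} := by
        intro x hx
        rw [Set.mem_setOf_eq] at hx ⊢
        rw [← hlt]
        calc q < τ n := hn
          _ ≤ ∏ j, σ (x j) := hx
          _ = _ := hprod x
      have hcard_le : {m : ℕ+ | τ n ≤ τ m}.ncard ≤ c' := by
        rw [hre (τ n) hτn_pos, hc'_def]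
        exact Set.ncard_le_ncard hBsub hLt_fin
      have heq := lower_set_eq _ hA_fin (hlower (τ n))
      have hmem : n ∈ {m : ℕ+ | τ n ≤ τ m} := le_refl (τ n)
      rw [heq] at hmem
      exact le_trans hmem hcard_le
    · intro n hn
      rw [← hAt'_eq] at hn
      exact lt_of_lt_of_le ht'_gt hn
  -- conclude
  have hfinal : {n : ℕ+ | τ n = q} = {n : ℕ+ | (n : ℕ) ≤ c} \ {n : ℕ+ | (n : ℕ) ≤ c'} := by
    ext n
    rw [← hAq_eq, ← hgt]
    simp only [Set.mem_diff, Set.mem_setOf_eq, not_lt]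
    constructor
    · intro h; exact ⟨le_of_eq h.symm, le_of_eq h⟩
    · intro ⟨h1, h2⟩; exact le_antisymm h2 h1
  have hcc : c' ≤ c := hsplit ▸ Nat.le_add_right _ _
  have hdiff := Set.ncard_diff
    (show {n : ℕ+ | (n : ℕ) ≤ c'} ⊆ {n : ℕ+ | (n : ℕ) ≤ c} from
      fun n hn => le_trans hn hcc) (init_finite c')
  rw [hfinal, hdiff, init_ncard, init_ncard, hsplit, Nat.add_sub_cancel_left]
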